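/- If U^k(ℤ_n) is trivial, then for every divisor m of n, U^k(ℤ_m) is trivial. -/

import Mathlib

/-- Cyclic factors of the group of units of `ZMod (p^a)` (Lemma int1). -/
noncomputable def pUnitsList (p a : ℕ) : List ℕ :=
  if p = 2 then (if 2 ≤ a then [2, 2 ^ (a - 2)] else [1]) else [p - 1, p ^ (a - 1)]

/-- Cyclic factors of `U(ZMod n)`, via the prime-power factorization of `n`. -/
noncomputable def unitsList (n : ℕ) : List ℕ :=
  (Nat.factorization n).support.toList.flatMap fun p => pUnitsList p (Nat.factorization n p)

/-- One application of the units functor to a product of cyclic rings. -/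
noncomputable def uStep (l : List ℕ) : List ℕ := l.flatMap unitsList

/-- Cyclic factors of the k-th iterated group of units `U^k(ZMod n)`. -/
noncomputable def UkList (k n : ℕ) : List ℕ := uStep^[k] [n]

/-- The k-th iterated group of units `U^k(ZMod n)`, as the product of its cyclic factors. -/
abbrev Uk (k n : ℕ) : Type := ∀ i : Fin (UkList k n).length, ZMod ((UkList k n).get i)

lemma pUnits_dvd {p b a : ℕ} (hb : 1 ≤ b) (hba : b ≤ a) :
    ∀ x ∈ pUnitsList p b, ∃ y ∈ pUnitsList p a, x ∣ y := by
  intro x hx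
  unfold pUnitsList at hx ⊢
  by_cases h2 : p = 2
  · subst h2
    by_cases hb2 : 2 ≤ b
    · have ha2 : 2 ≤ a := hb2.trans hba
      simp only [if_true, ha2, hb2, if_pos, List.mem_cons, List.not_mem_nil, or_false,
        reduceIte] at hx ⊢
      rcases hx with rfl | rfl
      · exact ⟨2, Or.inl rfl, dvd_rfl⟩
      · exact ⟨2 ^ (a - 2), Or.inr rfl, pow_dvd_pow 2 (by omega)⟩
    · simp only [hb2, if_false, reduceIte, List.mem_singleton] at hx
      subst hx
      simp only [reduceIte]
      by_cases ha2 : 2 ≤ a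
      · exact ⟨2, by simp [ha2], one_dvd _⟩
      · exact ⟨1, by simp [ha2], one_dvd _⟩
  · simp only [if_neg h2, List.mem_cons, List.not_mem_nil, or_false]
      at hx ⊢
    rcases hx with rfl | rfl
    · exact ⟨p - 1, Or.inl rfl, dvd_rfl⟩
    · exact ⟨p ^ (a - 1), Or.inr rfl, pow_dvd_pow p (by omega)⟩

lemma unitsList_pos (n : ℕ) : ∀ x ∈ unitsList n, 0 < x := by
  intro x hx
  rw [unitsList, List.mem_flatMap] at hx
  obtain ⟨p, hp, hxp⟩ := hx
  rw [Finset.mem_toList, Nat.support_factorization, Nat.mem_primeFactors] at hp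
  have h2 : 2 ≤ p := hp.1.two_le
  unfold pUnitsList at hxp
  split_ifs at hxp <;> simp only [List.mem_cons, List.mem_singleton, List.not_mem_nil,
    or_false] at hxp <;>
    rcases hxp with rfl | rfl | rfl <;> first | positivity | omega

lemma unitsList_dvd {m n : ℕ} (hn : 0 < n) (hmn : m ∣ n) :
    ∀ x ∈ unitsList m, ∃ y ∈ unitsList n, x ∣ y := by
  intro x hx
  rw [unitsList, List.mem_flatMap] at hx
  obtain ⟨p, hp, hxp⟩ := hx
  rw [Finset.mem_toList, Nat.support_factorization, Nat.mem_primeFactors] at hp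
  obtain ⟨hpp, hpm, hm0⟩ := hp
  have hb1 : 1 ≤ m.factorization p :=
    (Nat.Prime.factorization_pos_of_dvd hpp hm0 hpm)
  have hba : m.factorization p ≤ n.factorization p :=
    (Nat.factorization_le_iff_dvd hm0 hn.ne').mpr hmn p
  obtain ⟨y, hy, hxy⟩ := pUnits_dvd hb1 hba x hxp
  refine ⟨y, ?_, hxy⟩
  rw [unitsList, List.mem_flatMap]
  refine ⟨p, ?_, hy⟩
  rw [Finset.mem_toList, Nat.support_factorization, Nat.mem_primeFactors]
  exact ⟨hpp, hpm.trans hmn, hn.ne'⟩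

lemma UkList_pos (k n : ℕ) (hn : 0 < n) : ∀ x ∈ UkList k n, 0 < x := by
  induction k with
  | zero => simpa [UkList] using hn
  | succ k ih =>
    intro x hx
    rw [UkList, Function.iterate_succ_apply', uStep, List.mem_flatMap] at hx
    obtain ⟨a, _, hxa⟩ := hx
    exact unitsList_pos a x hxa

lemma UkList_dvd (k n m : ℕ) (hn : 0 < n) (hm : m ∣ n) :
    ∀ x ∈ UkList k m, ∃ y ∈ UkList k n, x ∣ y := by
  induction k with
  | zero =>
    intro x hx
    simp only [UkList, Function.iterate_zero_apply, List.mem_singleton] at hx ⊢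
    exact ⟨n, rfl, hx ▸ hm⟩
  | succ k ih =>
    intro x hx
    rw [UkList, Function.iterate_succ_apply', uStep, List.mem_flatMap] at hx
    obtain ⟨a, ha, hxa⟩ := hx
    obtain ⟨b, hb, hab⟩ := ih a ha
    have hbpos : 0 < b := UkList_pos k n hn b hb
    obtain ⟨y, hy, hxy⟩ := unitsList_dvd hbpos hab x hxa
    refine ⟨y, ?_, hxy⟩
    rw [UkList, Function.iterate_succ_apply', uStep, List.mem_flatMap]
    exact ⟨b, hb, hy⟩

lemma zmod_one_of_subsingleton {c : ℕ} (hc : 0 < c) (h : Subsingleton (ZMod c)) : c = 1 := by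
  haveI : NeZero c := ⟨hc.ne'⟩
  have h1 : Fintype.card (ZMod c) ≤ 1 := Fintype.card_le_one_iff_subsingleton.mpr h
  rw [ZMod.card] at h1
  omega

theorem stmt_19 (k n m : ℕ) (hn : 0 < n) (hm : m ∣ n)
    (htriv : Subsingleton (Uk k n)) : Subsingleton (Uk k m) := by
  have hm0 : 0 < m := Nat.pos_of_dvd_of_pos hm hn
  -- every entry of UkList k n equals 1
  have hone : ∀ y ∈ UkList k n, y = 1 := by
    intro y hy
    obtain ⟨i, rfl⟩ := List.get_of_mem hy
    refine zmod_one_of_subsingleton (UkList_pos k n hn _ hy) ?_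
    constructor
    intro a b
    have := htriv.elim (Function.update (fun j => (0 : ZMod ((UkList k n).get j))) i a)
      (Function.update (fun j => (0 : ZMod ((UkList k n).get j))) i b)
    have h2 := congrFun this i
    simpa using h2
  have hmone : ∀ x ∈ UkList k m, x = 1 := by
    intro x hx
    obtain ⟨y, hy, hxy⟩ := UkList_dvd k n m hn hm x hx
    have := hone y hy
    subst this
    exact Nat.eq_one_of_dvd_one hxy
  haveI : ∀ j : Fin (UkList k m).length, Subsingleton (ZMod ((UkList k m).get j)) := by
    intro j
    rw [hmone _ (List.get_mem _ _)]
    infer_instance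
  exact ⟨fun f g => funext fun j => Subsingleton.elim _ _⟩
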